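/- For K = SU(3), the admissible coadjoint orbits of subregular type are exactly the orbits K·((1+2n)/2 · ω_i) for n ∈ ℤ_{≥0} and i ∈ {1,2}. That is, for μ = t·ω_i ∈ σ_i (t > 0), the condition μ − ρ + ρ_{σ_i} ∈ Λ holds iff t ∈ (1/2) + ℤ_{≥0}. -/
import Mathlib

lemma aux_stmt7 (t : ℝ) (ht : 0 < t) :
    (∃ m : ℤ, t - 3/2 = (m : ℝ)) ↔ ∃ n : ℕ, t = (1 + 2 * (n : ℝ)) / 2 := by
  constructor
  · rintro ⟨m, hm⟩
    have h2 : ((-2:ℤ) : ℝ) < (m : ℝ) := by push_cast; linarith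
    have h3 : (-2:ℤ) < m := by exact_mod_cast h2
    have hm1 : (0:ℤ) ≤ m + 1 := by omega
    refine ⟨(m+1).toNat, ?_⟩
    have : ((m+1).toNat : ℝ) = (m : ℝ) + 1 := by
      have := Int.toNat_of_nonneg hm1
      exact_mod_cast congrArg (Int.cast : ℤ → ℝ) this
    rw [this]; linarith
  · rintro ⟨n, rfl⟩
    exact ⟨(n : ℤ) - 1, by push_cast; ring⟩

/-- Model: for `K = SU(3)`, `𝔱* = ℝ × ℝ` in the basis of fundamental weights
`ω₁ = (1,0)`, `ω₂ = (0,1)`; the weight lattice `Λ` is `ℤω₁ + ℤω₂`, `ρ = ω₁ + ω₂ = (1,1)`, and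
for the face `σᵢ = ℝ₊ωᵢ` the half sum `ρ_{σᵢ}` of positive roots of `𝔨_{σᵢ} ≅ u(2)` is half of
the simple root vanishing on `σᵢ`:  `ρ_{σ₁} = α₂/2 = (−1/2, 1)` and `ρ_{σ₂} = α₁/2 = (1, −1/2)`.
Claim: for `μ = t·ωᵢ` with `t > 0`, the admissibility condition `μ − ρ + ρ_{σᵢ} ∈ Λ` holds iff
`t ∈ 1/2 + ℤ₊`, i.e. the admissible subregular orbits are exactly `K·((1+2n)/2 · ωᵢ)`,
`n ∈ ℤ₊`, `i = 1, 2`. -/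
theorem stmt_7
    (Λ : Set (ℝ × ℝ)) (hΛ : Λ = {v : ℝ × ℝ | ∃ m n : ℤ, v = ((m : ℝ), (n : ℝ))})
    (ω₁ ω₂ ρ ρσ₁ ρσ₂ : ℝ × ℝ)
    (hω₁ : ω₁ = (1, 0)) (hω₂ : ω₂ = (0, 1)) (hρ : ρ = (1, 1))
    (hρσ₁ : ρσ₁ = (-(1/2 : ℝ), 1)) (hρσ₂ : ρσ₂ = (1, -(1/2 : ℝ))) :
    ∀ t : ℝ, 0 < t →
      ((t • ω₁ - ρ + ρσ₁ ∈ Λ ↔ ∃ n : ℕ, t = (1 + 2 * (n : ℝ)) / 2) ∧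
       (t • ω₂ - ρ + ρσ₂ ∈ Λ ↔ ∃ n : ℕ, t = (1 + 2 * (n : ℝ)) / 2)) := by
  intro t ht
  subst hΛ hω₁ hω₂ hρ hρσ₁ hρσ₂
  constructor
  · rw [show t • ((1:ℝ), (0:ℝ)) - (1,1) + (-(1/2 : ℝ), 1) = (t - 3/2, 0) by
      simp [Prod.ext_iff]; ring]
    rw [← aux_stmt7 t ht]
    constructor
    · rintro ⟨m, n, h⟩
      exact ⟨m, by simpa [Prod.ext_iff] using (Prod.ext_iff.mp h).1⟩
    · rintro ⟨m, hm⟩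
      exact ⟨m, 0, by simp [Prod.ext_iff, hm]⟩
  · rw [show t • ((0:ℝ), (1:ℝ)) - (1,1) + ((1:ℝ), -(1/2 : ℝ)) = (0, t - 3/2) by
      simp [Prod.ext_iff]; ring]
    rw [← aux_stmt7 t ht]
    constructor
    · rintro ⟨m, n, h⟩
      exact ⟨n, by simpa [Prod.ext_iff] using (Prod.ext_iff.mp h).2⟩
    · rintro ⟨m, hm⟩
      exact ⟨0, m, by simp [Prod.ext_iff, hm]⟩
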